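/- Let (γ, T, N, B, κ, τ) be a framed curve in ℝ³ parametrized by arclength, defined on an interval containing 0, of class C⁴, with κ(s) ≠ 0 for all s, and let r > 0. Then γ lies on a sphere of radius r (i.e., there exists c ∈ ℝ³ with ‖γ(s) − c‖ = r for all s) if and only if there exist constants A, B ∈ ℝ with A² + B² = r² such that ( A·cos(∫₀ˢ τ(σ) dσ) + B·sin(∫₀ˢ τ(σ) dσ) )·κ(s) = 1 for all s. -/

import Mathlib

open scoped RealInnerProductSpace

/-- The cross product of two vectors in Euclidean 3-space. -/
noncomputable def cross3 (u v : EuclideanSpace ℝ (Fin 3)) : EuclideanSpace ℝ (Fin 3) :=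
  WithLp.toLp 2 ![u 1 * v 2 - u 2 * v 1, u 2 * v 0 - u 0 * v 2, u 0 * v 1 - u 1 * v 0]

/-- A framed curve in ℝ³, parametrized by arclength, on the parameter set `I`:
the maps `T`, `N`, `B` form a positively oriented orthonormal frame at each `s ∈ I`,
`κ` and `τ` are continuous on `I`, and the Frenet equations
`γ' = T`, `T' = κ·N`, `N' = −κ·T + τ·B`, `B' = −τ·N` hold on `I`. -/
structure FramedCurveOn (γ T N B : ℝ → EuclideanSpace ℝ (Fin 3)) (κ τ : ℝ → ℝ)
    (I : Set ℝ) : Prop where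
  contκ : ContinuousOn κ I
  contτ : ContinuousOn τ I
  unitT : ∀ s ∈ I, ‖T s‖ = 1
  unitN : ∀ s ∈ I, ‖N s‖ = 1
  unitB : ∀ s ∈ I, ‖B s‖ = 1
  orthoTN : ∀ s ∈ I, ⟪T s, N s⟫ = (0 : ℝ)
  orthoTB : ∀ s ∈ I, ⟪T s, B s⟫ = (0 : ℝ)
  orthoNB : ∀ s ∈ I, ⟪N s, B s⟫ = (0 : ℝ)
  oriented : ∀ s ∈ I, B s = cross3 (T s) (N s)
  derivγ : ∀ s ∈ I, HasDerivWithinAt γ (T s) I s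
  derivT : ∀ s ∈ I, HasDerivWithinAt T (κ s • N s) I s
  derivN : ∀ s ∈ I, HasDerivWithinAt N ((-κ s) • T s + τ s • B s) I s
  derivB : ∀ s ∈ I, HasDerivWithinAt B ((-τ s) • N s) I s

/-- A closed framed curve in ℝ³ of period `L`: a framed curve defined on all of ℝ,
all of whose data is `L`-periodic. -/
structure ClosedFramedCurve (γ T N B : ℝ → EuclideanSpace ℝ (Fin 3)) (κ τ : ℝ → ℝ)
    (L : ℝ) : Prop where
  framed : FramedCurveOn γ T N B κ τ Set.univ
  periodicγ : Function.Periodic γ L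
  periodicT : Function.Periodic T L
  periodicN : Function.Periodic N L
  periodicB : Function.Periodic B L
  periodicκ : Function.Periodic κ L
  periodicτ : Function.Periodic τ L

/-- Breuer–Gottlieb–Wong characterization of spherical curves: a C⁴ framed curve with
nonvanishing curvature, defined on an (open) interval containing `0`, lies on a sphere of
radius `r` iff there are constants `A₀`, `B₀` with `A₀² + B₀² = r²` such that
`(A₀·cos ∫₀ˢτ + B₀·sin ∫₀ˢτ)·κ(s) = 1` for all `s`. -/
private lemma constOn_of_deriv_zero {E : Type*} [NormedAddCommGroup E] [NormedSpace ℝ E]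
    {f f' : ℝ → E} {I : Set ℝ} (hconv : Convex ℝ I)
    (hf : ∀ s ∈ I, HasDerivWithinAt f (f' s) I s) (hf0 : ∀ s ∈ I, f' s = 0)
    {x y : ℝ} (hx : x ∈ I) (hy : y ∈ I) : f x = f y := by
  have h := Convex.norm_image_sub_le_of_norm_hasDerivWithin_le (C := 0) hf
      (fun s hs => by rw [hf0 s hs]; simp) hconv hy hx
  have h2 : ‖f x - f y‖ ≤ 0 := by simpa using h
  exact sub_eq_zero.mp (norm_le_zero_iff.mp h2)

private lemma parseval3 {v : Fin 3 → EuclideanSpace ℝ (Fin 3)} (hon : Orthonormal ℝ v)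
    (x : EuclideanSpace ℝ (Fin 3)) :
    ‖x‖ ^ 2 = ⟪x, v 0⟫ ^ 2 + ⟪x, v 1⟫ ^ 2 + ⟪x, v 2⟫ ^ 2 := by
  have hsp : ⊤ ≤ Submodule.span ℝ (Set.range v) :=
    (hon.linearIndependent.span_eq_top_of_card_eq_finrank (by simp)).ge
  let b : OrthonormalBasis (Fin 3) ℝ (EuclideanSpace ℝ (Fin 3)) := OrthonormalBasis.mk hon hsp
  have hb : ⇑b = v := OrthonormalBasis.coe_mk hon hsp
  have h := b.sum_inner_mul_inner x x
  rw [hb, real_inner_self_eq_norm_sq, Fin.sum_univ_three] at h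
  rw [← h, real_inner_comm (v 0) x, real_inner_comm (v 1) x, real_inner_comm (v 2) x]
  ring

theorem wong_spherical_characterization (γ T N B : ℝ → EuclideanSpace ℝ (Fin 3))
    (κ τ : ℝ → ℝ) (I : Set ℝ) (hIopen : IsOpen I) (hIint : I.OrdConnected)
    (h0 : (0 : ℝ) ∈ I) (h : FramedCurveOn γ T N B κ τ I)
    (hγC4 : ContDiffOn ℝ 4 γ I) (hκ0 : ∀ s ∈ I, κ s ≠ 0)
    (r : ℝ) (hr : 0 < r) :
    (∃ c : EuclideanSpace ℝ (Fin 3), ∀ s ∈ I, ‖γ s - c‖ = r) ↔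
      (∃ A₀ B₀ : ℝ, A₀ ^ 2 + B₀ ^ 2 = r ^ 2 ∧ ∀ s ∈ I,
        (A₀ * Real.cos (∫ σ in (0 : ℝ)..s, τ σ) +
          B₀ * Real.sin (∫ σ in (0 : ℝ)..s, τ σ)) * κ s = 1) := by
  have hconv : Convex ℝ I := hIint.convex
  set θ : ℝ → ℝ := fun s => ∫ σ in (0 : ℝ)..s, τ σ with hθdef
  have hθ0 : θ 0 = 0 := intervalIntegral.integral_same
  have hθ : ∀ s ∈ I, HasDerivWithinAt θ (τ s) I s := by
    intro s hs
    have hsub : Set.uIcc 0 s ⊆ I := hIint.uIcc_subset h0 hs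
    have hint : IntervalIntegrable τ MeasureTheory.volume 0 s :=
      (h.contτ.mono hsub).intervalIntegrable
    have hmeas : StronglyMeasurableAtFilter τ (nhds s) :=
      h.contτ.stronglyMeasurableAtFilter hIopen s hs
    have hca : ContinuousAt τ s := h.contτ.continuousAt (hIopen.mem_nhds hs)
    exact (intervalIntegral.integral_hasDerivAt_right hint hmeas hca).hasDerivWithinAt
  -- rotated normal frame
  set Q : ℝ → EuclideanSpace ℝ (Fin 3) :=
    fun s => Real.cos (θ s) • N s - Real.sin (θ s) • B s with hQdef
  set R : ℝ → EuclideanSpace ℝ (Fin 3) :=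
    fun s => Real.sin (θ s) • N s + Real.cos (θ s) • B s with hRdef
  have hQ0 : Q 0 = N 0 := by simp [hQdef, hθ0]
  have hR0 : R 0 = B 0 := by simp [hRdef, hθ0]
  have hQ' : ∀ s ∈ I, HasDerivWithinAt Q (-(κ s * Real.cos (θ s)) • T s) I s := by
    intro s hs
    have h1 := ((hθ s hs).cos.smul (h.derivN s hs)).sub ((hθ s hs).sin.smul (h.derivB s hs))
    exact h1.congr_deriv (by module)
  have hR' : ∀ s ∈ I, HasDerivWithinAt R (-(κ s * Real.sin (θ s)) • T s) I s := by
    intro s hs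
    have h1 := ((hθ s hs).sin.smul (h.derivN s hs)).add ((hθ s hs).cos.smul (h.derivB s hs))
    exact h1.congr_deriv (by module)
  -- inner products of the frame
  have hTT : ∀ s ∈ I, ⟪T s, T s⟫ = (1:ℝ) := fun s hs => by
    rw [real_inner_self_eq_norm_sq, h.unitT s hs, one_pow]
  have hNN : ∀ s ∈ I, ⟪N s, N s⟫ = (1:ℝ) := fun s hs => by
    rw [real_inner_self_eq_norm_sq, h.unitN s hs, one_pow]
  have hBB : ∀ s ∈ I, ⟪B s, B s⟫ = (1:ℝ) := fun s hs => by
    rw [real_inner_self_eq_norm_sq, h.unitB s hs, one_pow]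
  have hNT : ∀ s ∈ I, ⟪N s, T s⟫ = (0:ℝ) := fun s hs => by
    rw [real_inner_comm]; exact h.orthoTN s hs
  have hBT : ∀ s ∈ I, ⟪B s, T s⟫ = (0:ℝ) := fun s hs => by
    rw [real_inner_comm]; exact h.orthoTB s hs
  have hBN : ∀ s ∈ I, ⟪B s, N s⟫ = (0:ℝ) := fun s hs => by
    rw [real_inner_comm]; exact h.orthoNB s hs
  have hsc : ∀ s : ℝ, Real.cos (θ s) ^ 2 + Real.sin (θ s) ^ 2 = 1 :=
    fun s => Real.cos_sq_add_sin_sq (θ s)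
  have hTQ : ∀ s ∈ I, ⟪T s, Q s⟫ = (0:ℝ) := by
    intro s hs
    simp only [hQdef, inner_sub_right, real_inner_smul_right, h.orthoTN s hs, h.orthoTB s hs]
    ring
  have hTR : ∀ s ∈ I, ⟪T s, R s⟫ = (0:ℝ) := by
    intro s hs
    simp only [hRdef, inner_add_right, real_inner_smul_right, h.orthoTN s hs, h.orthoTB s hs]
    ring
  have hQQ : ∀ s ∈ I, ⟪Q s, Q s⟫ = (1:ℝ) := by
    intro s hs
    simp only [hQdef, inner_sub_left, inner_sub_right, real_inner_smul_left,
      real_inner_smul_right, hNN s hs, hBB s hs, hBN s hs, h.orthoNB s hs]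
    linear_combination hsc s
  have hRR : ∀ s ∈ I, ⟪R s, R s⟫ = (1:ℝ) := by
    intro s hs
    simp only [hRdef, inner_add_left, inner_add_right, real_inner_smul_left,
      real_inner_smul_right, hNN s hs, hBB s hs, hBN s hs, h.orthoNB s hs]
    linear_combination hsc s
  have hQR : ∀ s ∈ I, ⟪Q s, R s⟫ = (0:ℝ) := by
    intro s hs
    simp only [hQdef, hRdef, inner_sub_left, inner_add_right, real_inner_smul_left,
      real_inner_smul_right, hNN s hs, hBB s hs, hBN s hs, h.orthoNB s hs]
    ring
  -- key rotation identity
  have hrot : ∀ s ∈ I, ∀ x : EuclideanSpace ℝ (Fin 3),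
      Real.cos (θ s) * ⟪x, Q s⟫ + Real.sin (θ s) * ⟪x, R s⟫ = ⟪x, N s⟫ := by
    intro s hs x
    simp only [hQdef, hRdef, inner_sub_right, inner_add_right, real_inner_smul_right]
    linear_combination ⟪x, N s⟫ * hsc s
  constructor
  · rintro ⟨c, hc⟩
    set f : ℝ → EuclideanSpace ℝ (Fin 3) := fun s => γ s - c with hfdef
    have hf : ∀ s ∈ I, HasDerivWithinAt f (T s) I s :=
      fun s hs => (h.derivγ s hs).sub_const c
    -- ⟪f, T⟫ = 0
    have hfT : ∀ s ∈ I, ⟪f s, T s⟫ = (0:ℝ) := by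
      intro s hs
      have hA : HasDerivAt (fun t => ⟪f t, f t⟫) (⟪f s, T s⟫ + ⟪T s, f s⟫) s :=
        (((hf s hs).inner ℝ (hf s hs)).hasDerivAt (hIopen.mem_nhds hs))
      have hB : HasDerivAt (fun t => ⟪f t, f t⟫) 0 s := by
        apply (hasDerivAt_const s (r^2)).congr_of_eventuallyEq
        filter_upwards [hIopen.mem_nhds hs] with t ht
        rw [real_inner_self_eq_norm_sq, hc t ht]
      have := hA.unique hB
      rw [real_inner_comm]
      rw [real_inner_comm (T s) (f s)] at this
      linarith
    -- κ ⟪f, N⟫ = -1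
    have hfN : ∀ s ∈ I, κ s * ⟪f s, N s⟫ = (-1:ℝ) := by
      intro s hs
      have hA : HasDerivAt (fun t => ⟪f t, T t⟫) (⟪f s, κ s • N s⟫ + ⟪T s, T s⟫) s :=
        (((hf s hs).inner ℝ (h.derivT s hs)).hasDerivAt (hIopen.mem_nhds hs))
      have hB : HasDerivAt (fun t => ⟪f t, T t⟫) 0 s := by
        apply (hasDerivAt_const s (0:ℝ)).congr_of_eventuallyEq
        filter_upwards [hIopen.mem_nhds hs] with t ht
        exact hfT t ht
      have := hA.unique hB
      rw [real_inner_smul_right, hTT s hs] at this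
      linarith
    -- a and b are constant along the curve
    have haconst : ∀ s ∈ I, ⟪f s, Q s⟫ = ⟪f 0, N 0⟫ := by
      intro s hs
      have := constOn_of_deriv_zero (f := fun t => ⟪f t, Q t⟫)
        (f' := fun t => ⟪f t, -(κ t * Real.cos (θ t)) • T t⟫ + ⟪T t, Q t⟫) hconv
        (fun t ht => (hf t ht).inner ℝ (hQ' t ht))
        (fun t ht => by
          show ⟪f t, -(κ t * Real.cos (θ t)) • T t⟫ + ⟪T t, Q t⟫ = (0:ℝ)
          rw [real_inner_smul_right, hfT t ht, hTQ t ht]; ring) hs h0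
      have h2 : ⟪f s, Q s⟫ = ⟪f 0, Q 0⟫ := this
      rw [h2, hQ0]
    have hbconst : ∀ s ∈ I, ⟪f s, R s⟫ = ⟪f 0, B 0⟫ := by
      intro s hs
      have := constOn_of_deriv_zero (f := fun t => ⟪f t, R t⟫)
        (f' := fun t => ⟪f t, -(κ t * Real.sin (θ t)) • T t⟫ + ⟪T t, R t⟫) hconv
        (fun t ht => (hf t ht).inner ℝ (hR' t ht))
        (fun t ht => by
          show ⟪f t, -(κ t * Real.sin (θ t)) • T t⟫ + ⟪T t, R t⟫ = (0:ℝ)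
          rw [real_inner_smul_right, hfT t ht, hTR t ht]; ring) hs h0
      have h2 : ⟪f s, R s⟫ = ⟪f 0, R 0⟫ := this
      rw [h2, hR0]
    refine ⟨-⟪f 0, N 0⟫, -⟪f 0, B 0⟫, ?_, ?_⟩
    · -- Parseval at 0
      have hon : Orthonormal ℝ ![T 0, N 0, B 0] := by
        rw [orthonormal_iff_ite]
        intro i j
        fin_cases i <;> fin_cases j <;>
          simp [hTT 0 h0, hNN 0 h0, hBB 0 h0, h.orthoTN 0 h0, h.orthoTB 0 h0,
            h.orthoNB 0 h0, hNT 0 h0, hBT 0 h0, hBN 0 h0,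
            h.unitT 0 h0, h.unitN 0 h0, h.unitB 0 h0]
      have hp := parseval3 hon (f 0)
      simp only [Matrix.cons_val_zero, Matrix.cons_val_one, Matrix.head_cons,
        Matrix.cons_val_two, Matrix.tail_cons] at hp
      rw [hfT 0 h0, hc 0 h0] at hp
      rw [neg_pow, neg_pow]
      linarith [hp]
    · intro s hs
      have hk := hfN s hs
      have hr1 := hrot s hs (f s)
      have ha := haconst s hs
      have hb := hbconst s hs
      have : -⟪f 0, N 0⟫ * Real.cos (θ s) + -⟪f 0, B 0⟫ * Real.sin (θ s) = -⟪f s, N s⟫ := by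
        rw [← ha, ← hb]; linarith [hr1]
      calc (-⟪f 0, N 0⟫ * Real.cos (θ s) + -⟪f 0, B 0⟫ * Real.sin (θ s)) * κ s
          = -⟪f s, N s⟫ * κ s := by rw [this]
        _ = 1 := by nlinarith [hk]
  · rintro ⟨A₀, B₀, hAB, hEq⟩
    set cf : ℝ → EuclideanSpace ℝ (Fin 3) :=
      fun s => γ s + (A₀ • Q s + B₀ • R s) with hcfdef
    have hcf' : ∀ s ∈ I, HasDerivWithinAt cf
        ((1 - (A₀ * Real.cos (θ s) + B₀ * Real.sin (θ s)) * κ s) • T s) I s := by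
      intro s hs
      have h1 := (h.derivγ s hs).add
        (((hQ' s hs).const_smul A₀).add ((hR' s hs).const_smul B₀))
      exact h1.congr_deriv (by module)
    have hcf0 : ∀ s ∈ I,
        ((1 - (A₀ * Real.cos (θ s) + B₀ * Real.sin (θ s)) * κ s) • T s
          : EuclideanSpace ℝ (Fin 3)) = 0 := by
      intro s hs
      rw [hEq s hs]
      simp
    have hconst : ∀ s ∈ I, cf s = cf 0 :=
      fun s hs => constOn_of_deriv_zero hconv hcf' hcf0 hs h0
    refine ⟨cf 0, fun s hs => ?_⟩
    have hdiff : γ s - cf 0 = -(A₀ • Q s + B₀ • R s) := by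
      rw [← hconst s hs, hcfdef]
      simp
    rw [hdiff, norm_neg]
    have hinner : ⟪A₀ • Q s + B₀ • R s, A₀ • Q s + B₀ • R s⟫ = r ^ 2 := by
      rw [real_inner_add_add_self, real_inner_smul_left, real_inner_smul_left,
        real_inner_smul_left, real_inner_smul_right, real_inner_smul_right,
        real_inner_smul_right, hQQ s hs, hQR s hs, hRR s hs]
      linear_combination hAB
    have hn : ‖A₀ • Q s + B₀ • R s‖ ^ 2 = r ^ 2 := by
      rw [← real_inner_self_eq_norm_sq, hinner]
    have h2 : (‖A₀ • Q s + B₀ • R s‖ - r) * (‖A₀ • Q s + B₀ • R s‖ + r) = 0 := by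
      linear_combination hn
    rcases mul_eq_zero.mp h2 with h3 | h3
    · linarith [sub_eq_zero.mp h3]
    · linarith [norm_nonneg (A₀ • Q s + B₀ • R s)]
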